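/- Let f : I → (0,∞) be a twice differentiable positive function on an interval I ⊆ (0,∞). If x·(f(x)·f''(x) - f'(x)^2) + f(x)·f'(x) ≥ 0 for all x ∈ I, then f is geometrically convex on I, i.e., f(x^λ y^(1-λ)) ≤ f(x)^λ f(y)^(1-λ) for all x, y ∈ I and λ ∈ [0,1]. -/

import Mathlib

open Real Set

theorem geom_convex_of_second_order_condition (a b : ℝ) (ha : 0 ≤ a) (f : ℝ → ℝ)
    (hpos : ∀ x ∈ Set.Ioo a b, 0 < f x)
    (hdiff : ∀ x ∈ Set.Ioo a b, DifferentiableAt ℝ f x)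
    (hdiff2 : ∀ x ∈ Set.Ioo a b, DifferentiableAt ℝ (deriv f) x)
    (hcond : ∀ x ∈ Set.Ioo a b,
      x * (f x * deriv (deriv f) x - (deriv f x) ^ 2) + f x * deriv f x ≥ 0) :
    ∀ x ∈ Set.Ioo a b, ∀ y ∈ Set.Ioo a b, ∀ l ∈ Set.Icc (0:ℝ) 1,
      f (x ^ l * y ^ (1 - l)) ≤ f x ^ l * f y ^ (1 - l) := by
  set s : Set ℝ := Real.exp ⁻¹' (Set.Ioo a b) with hs
  have hsopen : IsOpen s := isOpen_Ioo.preimage Real.continuous_exp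
  have hsconv : Convex ℝ s := by
    rw [convex_iff_ordConnected]
    constructor
    intro t ht u hu v hv
    have h1 : Real.exp v ∈ Set.Icc (Real.exp t) (Real.exp u) :=
      ⟨Real.exp_le_exp.2 hv.1, Real.exp_le_exp.2 hv.2⟩
    exact Set.ordConnected_Ioo.out ht hu h1
  set G : ℝ → ℝ := fun t => Real.log (f (Real.exp t)) with hG
  set G1 : ℝ → ℝ := fun t => Real.exp t * deriv f (Real.exp t) / f (Real.exp t) with hG1
  have hGd : ∀ t ∈ s, HasDerivAt G (G1 t) t := by
    intro t ht
    have hx : Real.exp t ∈ Set.Ioo a b := ht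
    have hfx : 0 < f (Real.exp t) := hpos _ hx
    have he : HasDerivAt Real.exp (Real.exp t) t := Real.hasDerivAt_exp t
    have hf : HasDerivAt f (deriv f (Real.exp t)) (Real.exp t) := (hdiff _ hx).hasDerivAt
    have hcomp : HasDerivAt (fun u => f (Real.exp u))
        (deriv f (Real.exp t) * Real.exp t) t := hf.comp t he
    have hlog : HasDerivAt Real.log (f (Real.exp t))⁻¹ (f (Real.exp t)) :=
      Real.hasDerivAt_log hfx.ne'
    have := hlog.comp t hcomp
    refine this.congr_deriv ?_
    simp only [hG1]
    field_simp
  -- derivative of G1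
  have hG1d : ∀ t ∈ s, HasDerivAt G1
      (Real.exp t * (Real.exp t * (f (Real.exp t) * deriv (deriv f) (Real.exp t)
        - (deriv f (Real.exp t)) ^ 2) + f (Real.exp t) * deriv f (Real.exp t))
        / (f (Real.exp t)) ^ 2) t := by
    intro t ht
    have hx : Real.exp t ∈ Set.Ioo a b := ht
    have hfx : 0 < f (Real.exp t) := hpos _ hx
    have he : HasDerivAt Real.exp (Real.exp t) t := Real.hasDerivAt_exp t
    have hf : HasDerivAt f (deriv f (Real.exp t)) (Real.exp t) := (hdiff _ hx).hasDerivAt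
    have hf2 : HasDerivAt (deriv f) (deriv (deriv f) (Real.exp t)) (Real.exp t) :=
      (hdiff2 _ hx).hasDerivAt
    have hD : HasDerivAt (fun u => f (Real.exp u))
        (deriv f (Real.exp t) * Real.exp t) t := hf.comp t he
    have hf2c : HasDerivAt (fun u => deriv f (Real.exp u))
        (deriv (deriv f) (Real.exp t) * Real.exp t) t := hf2.comp t he
    have hN : HasDerivAt (fun u => Real.exp u * deriv f (Real.exp u))
        (Real.exp t * deriv f (Real.exp t)
          + Real.exp t * (deriv (deriv f) (Real.exp t) * Real.exp t)) t := by
      exact he.mul hf2c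
    have := hN.div hD hfx.ne'
    refine this.congr_deriv ?_
    field_simp
    ring
  have hG1nonneg : ∀ t ∈ s,
      0 ≤ Real.exp t * (Real.exp t * (f (Real.exp t) * deriv (deriv f) (Real.exp t)
        - (deriv f (Real.exp t)) ^ 2) + f (Real.exp t) * deriv f (Real.exp t))
        / (f (Real.exp t)) ^ 2 := by
    intro t ht
    have hx : Real.exp t ∈ Set.Ioo a b := ht
    have hfx : 0 < f (Real.exp t) := hpos _ hx
    have h1 := hcond _ hx
    positivity
  have hintS : interior s = s := hsopen.interior_eq
  have hderivG : ∀ t ∈ s, deriv G t = G1 t := fun t ht => (hGd t ht).deriv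
  have hconvG : ConvexOn ℝ s G := by
    apply convexOn_of_deriv2_nonneg' hsconv
    · intro t ht
      exact (hGd t ht).differentiableAt.differentiableWithinAt
    · intro t ht
      have heq : deriv G =ᶠ[nhds t] G1 :=
        Filter.eventuallyEq_of_mem (hsopen.mem_nhds ht) hderivG
      exact (heq.differentiableAt_iff.mpr (hG1d t ht).differentiableAt).differentiableWithinAt
    · intro t ht
      have heq : deriv G =ᶠ[nhds t] G1 :=
        Filter.eventuallyEq_of_mem (hsopen.mem_nhds ht) hderivG
      have : deriv (deriv G) t = deriv G1 t := heq.deriv_eq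
      simp only [Function.iterate_succ, Function.iterate_zero, Function.comp_apply, id]
      rw [this, (hG1d t ht).deriv]
      exact hG1nonneg t ht
  intro x hx y hy l hl
  have hx0 : 0 < x := lt_of_le_of_lt ha hx.1
  have hy0 : 0 < y := lt_of_le_of_lt ha hy.1
  have htx : Real.log x ∈ s := by simp [hs, Real.exp_log hx0, hx]
  have hty : Real.log y ∈ s := by simp [hs, Real.exp_log hy0, hy]
  have hl1 : 0 ≤ 1 - l := by linarith [hl.2]
  have key := hconvG.2 htx hty hl.1 hl1 (by ring)
  have hexp : Real.exp (l * Real.log x + (1 - l) * Real.log y) = x ^ l * y ^ (1 - l) := by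
    rw [Real.exp_add, Real.rpow_def_of_pos hx0, Real.rpow_def_of_pos hy0,
      mul_comm (Real.log x), mul_comm (Real.log y)]
  have hmem : x ^ l * y ^ (1 - l) ∈ Set.Ioo a b := by
    have := hsconv htx hty hl.1 hl1 (by ring)
    simpa [hs, smul_eq_mul, hexp] using this
  have hGx : G (Real.log x) = Real.log (f x) := by simp [hG, Real.exp_log hx0]
  have hGy : G (Real.log y) = Real.log (f y) := by simp [hG, Real.exp_log hy0]
  have key2 : Real.log (f (x ^ l * y ^ (1 - l))) ≤
      l * Real.log (f x) + (1 - l) * Real.log (f y) := by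
    have := key
    simp only [smul_eq_mul, hGx, hGy] at this
    rw [hG] at this
    beta_reduce at this
    rwa [hexp] at this
  have hfp := hpos _ hmem
  have hfx := hpos _ hx
  have hfy := hpos _ hy
  calc f (x ^ l * y ^ (1 - l))
      = Real.exp (Real.log (f (x ^ l * y ^ (1 - l)))) := (Real.exp_log hfp).symm
    _ ≤ Real.exp (l * Real.log (f x) + (1 - l) * Real.log (f y)) := Real.exp_le_exp.2 key2
    _ = f x ^ l * f y ^ (1 - l) := by
        rw [Real.exp_add, Real.rpow_def_of_pos hfx, Real.rpow_def_of_pos hfy,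
          mul_comm (Real.log (f x)), mul_comm (Real.log (f y))]
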